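/- Let n ≥ 3, T_c ∈ ℝ, ε > 0, and W_ε(y) = (ε/(ε² + |y − T_c ε e_n|²))^{(n-2)/2} on ℝⁿ. Then for all i, j ∈ {1, …, n}, W_ε ∂_i∂_j W_ε − (n/(n−2)) ∂_i W_ε ∂_j W_ε = (1/n)(W_ε ΔW_ε − (n/(n−2)) |∇W_ε|²) δ_{ij}. -/

import Mathlib

/-- The `i`-th partial derivative of `f : ℝⁿ → ℝ` at `y`. -/
noncomputable def pd (n : ℕ) (f : EuclideanSpace ℝ (Fin n) → ℝ) (i : Fin n)
    (y : EuclideanSpace ℝ (Fin n)) : ℝ :=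
  fderiv ℝ f y (EuclideanSpace.single i 1)

/-- The Euclidean Laplacian of `f : ℝⁿ → ℝ` at `y`. -/
noncomputable def lap (n : ℕ) (f : EuclideanSpace ℝ (Fin n) → ℝ)
    (y : EuclideanSpace ℝ (Fin n)) : ℝ :=
  ∑ i, pd n (pd n f i) i y

namespace BubbleAux

variable {n : ℕ}

noncomputable def gfun (a : EuclideanSpace ℝ (Fin n)) (c : ℝ)
    (y : EuclideanSpace ℝ (Fin n)) : ℝ :=
  c + ∑ k, (y k - a k) ^ 2

lemma gfun_pos {a : EuclideanSpace ℝ (Fin n)} {c : ℝ} (hc : 0 < c)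
    (y : EuclideanSpace ℝ (Fin n)) : 0 < gfun a c y :=
  add_pos_of_pos_of_nonneg hc (Finset.sum_nonneg fun _ _ => sq_nonneg _)

noncomputable def Lmap (a y : EuclideanSpace ℝ (Fin n)) :
    EuclideanSpace ℝ (Fin n) →L[ℝ] ℝ :=
  ∑ k, (2 * (y k - a k)) • (EuclideanSpace.proj k : EuclideanSpace ℝ (Fin n) →L[ℝ] ℝ)

lemma Lmap_apply (a y : EuclideanSpace ℝ (Fin n)) (i : Fin n) :
    Lmap a y (EuclideanSpace.single i 1) = 2 * (y i - a i) := by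
  simp [Lmap, ContinuousLinearMap.sum_apply, EuclideanSpace.single_apply]

lemma gfun_hasFDerivAt (a : EuclideanSpace ℝ (Fin n)) (c : ℝ)
    (y : EuclideanSpace ℝ (Fin n)) : HasFDerivAt (gfun a c) (Lmap a y) y := by
  have h : ∀ k : Fin n, HasFDerivAt (fun y : EuclideanSpace ℝ (Fin n) => (y k - a k) ^ 2)
      ((2 * (y k - a k)) • (EuclideanSpace.proj k : EuclideanSpace ℝ (Fin n) →L[ℝ] ℝ)) y := by
    intro k
    have h1 : HasFDerivAt (fun y : EuclideanSpace ℝ (Fin n) => y k - a k)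
        (EuclideanSpace.proj k : EuclideanSpace ℝ (Fin n) →L[ℝ] ℝ) y := by
      simpa using ((EuclideanSpace.proj k : EuclideanSpace ℝ (Fin n) →L[ℝ] ℝ)).hasFDerivAt.sub_const (a k)
    rw [show ((2 * (y k - a k)) • (EuclideanSpace.proj k : EuclideanSpace ℝ (Fin n) →L[ℝ] ℝ))
        = (y k - a k) • (EuclideanSpace.proj k : EuclideanSpace ℝ (Fin n) →L[ℝ] ℝ)
          + (y k - a k) • (EuclideanSpace.proj k : EuclideanSpace ℝ (Fin n) →L[ℝ] ℝ) by
      rw [two_mul, add_smul]]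
    simp only [pow_two]
    exact h1.mul h1
  have hs := HasFDerivAt.fun_sum (fun k (_ : k ∈ Finset.univ) => h k)
  have hs2 := hs.const_add c
  exact hs2

lemma pd_rpow (a : EuclideanSpace ℝ (Fin n)) {c : ℝ} (hc : 0 < c) (C q : ℝ) (i : Fin n)
    (y : EuclideanSpace ℝ (Fin n)) :
    pd n (fun y => C * gfun a c y ^ q) i y
      = C * (q * gfun a c y ^ (q - 1) * (2 * (y i - a i))) := by
  have h := ((gfun_hasFDerivAt a c y).rpow_const (p := q)
    (Or.inl (gfun_pos hc y).ne')).const_mul C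
  rw [pd, h.fderiv]
  simp only [ContinuousLinearMap.coe_smul', Pi.smul_apply, Lmap_apply, smul_eq_mul]

lemma pd_rpow_mul (a : EuclideanSpace ℝ (Fin n)) {c : ℝ} (hc : 0 < c) (C q : ℝ) (i j : Fin n)
    (y : EuclideanSpace ℝ (Fin n)) :
    pd n (fun y => C * (gfun a c y ^ q * (y j - a j))) i y
      = C * (q * gfun a c y ^ (q - 1) * (2 * (y i - a i)) * (y j - a j)
          + gfun a c y ^ q * (if j = i then 1 else 0)) := by
  have h1 := (gfun_hasFDerivAt a c y).rpow_const (p := q) (Or.inl (gfun_pos hc y).ne')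
  have h2 : HasFDerivAt (fun y : EuclideanSpace ℝ (Fin n) => y j - a j)
      (EuclideanSpace.proj j : EuclideanSpace ℝ (Fin n) →L[ℝ] ℝ) y := by
    simpa using ((EuclideanSpace.proj j : EuclideanSpace ℝ (Fin n) →L[ℝ] ℝ)).hasFDerivAt.sub_const (a j)
  have h := (h1.mul h2).const_mul C
  rw [pd, HasFDerivAt.fderiv (f := fun y => C * (gfun a c y ^ q * (y j - a j))) h]
  have e1 : (EuclideanSpace.proj j : EuclideanSpace ℝ (Fin n) →L[ℝ] ℝ)
      (EuclideanSpace.single i (1:ℝ)) = (if j = i then 1 else 0) := by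
    simp [EuclideanSpace.single_apply]
  simp only [ContinuousLinearMap.coe_smul', Pi.smul_apply, ContinuousLinearMap.add_apply,
    Lmap_apply, e1, smul_eq_mul]
  ring

end BubbleAux

open BubbleAux in
/-- The bubble `W_ε(y) = (ε/(ε² + |y − T_c ε e_n|²))^((n-2)/2)` satisfies the pointwise
identity `W_ε ∂_i∂_j W_ε − (n/(n−2)) ∂_iW_ε ∂_jW_ε
  = (1/n)(W_ε ΔW_ε − (n/(n−2)) |∇W_ε|²) δ_{ij}` on `ℝⁿ`. -/


theorem bubble_hessian_identity (n : ℕ) (hn : 3 ≤ n) (Tc ε : ℝ) (hε : 0 < ε)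
    (en : Fin n) (hen : (en : ℕ) = n - 1)
    (W : EuclideanSpace ℝ (Fin n) → ℝ)
    (hW : ∀ y, W y =
      (ε / (ε ^ 2 + ‖y - (Tc * ε) • EuclideanSpace.single en (1:ℝ)‖ ^ 2))
        ^ (((n : ℝ) - 2) / 2)) :
    ∀ (i j : Fin n) (y : EuclideanSpace ℝ (Fin n)),
      W y * pd n (pd n W j) i y - ((n : ℝ) / ((n : ℝ) - 2)) * pd n W i y * pd n W j y =
        (1 / (n : ℝ)) *
          (W y * lap n W y - ((n : ℝ) / ((n : ℝ) - 2)) * ∑ k, (pd n W k y) ^ 2) *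
          (if i = j then 1 else 0) := by
  intro i j y
  set a : EuclideanSpace ℝ (Fin n) := (Tc * ε) • EuclideanSpace.single en (1:ℝ) with ha
  have hc : (0:ℝ) < ε ^ 2 := by positivity
  obtain ⟨p, hpdef⟩ : ∃ p' : ℝ, p' = ((n : ℝ) - 2) / 2 := ⟨_, rfl⟩
  have hn3 : (3:ℝ) ≤ (n:ℝ) := by exact_mod_cast hn
  have hnp : (n : ℝ) = 2 * p + 2 := by rw [hpdef]; ring
  have hp_pos : 0 < p := by rw [hpdef]; apply div_pos (by linarith) two_pos
  have hW' : W = fun z => ε ^ p * (gfun a (ε^2) z) ^ (-p) := by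
    funext z
    have hnorm : ‖z - a‖ ^ 2 = ∑ k, (z k - a k) ^ 2 := by
      rw [EuclideanSpace.norm_eq,
        Real.sq_sqrt (Finset.sum_nonneg fun _ _ => sq_nonneg _)]
      refine Finset.sum_congr rfl fun k _ => ?_
      simp [Real.norm_eq_abs, sq_abs]
    have hGz : gfun a (ε^2) z = ε ^ 2 + ‖z - a‖ ^ 2 := by rw [gfun, hnorm]
    have hGpos : 0 < ε ^ 2 + ‖z - a‖ ^ 2 := by positivity
    rw [hW z, hGz, ← hpdef, Real.div_rpow hε.le hGpos.le, Real.rpow_neg hGpos.le,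
      div_eq_mul_inv]
  have hpdW : ∀ (k : Fin n) (z : EuclideanSpace ℝ (Fin n)),
      pd n W k z = (-2*p*ε^p) * (gfun a (ε^2) z ^ (-p-1) * (z k - a k)) := by
    intro k z
    rw [hW', pd_rpow a hc (ε^p) (-p) k z]
    ring
  have hpdW_fun : ∀ k : Fin n,
      pd n W k = fun z => (-2*p*ε^p) * (gfun a (ε^2) z ^ (-p-1) * (z k - a k)) :=
    fun k => funext fun z => hpdW k z
  have hpd2 : ∀ (i' j' : Fin n) (z : EuclideanSpace ℝ (Fin n)),
      pd n (pd n W j') i' z =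
        (-2*p*ε^p) * ((-p-1) * gfun a (ε^2) z ^ (-p-1-1) * (2*(z i' - a i')) * (z j' - a j')
          + gfun a (ε^2) z ^ (-p-1) * (if j' = i' then 1 else 0)) := by
    intro i' j' z
    rw [hpdW_fun j', pd_rpow_mul a hc (-2*p*ε^p) (-p-1) i' j' z]
  obtain ⟨G, hGdef⟩ : ∃ G' : ℝ, G' = gfun a (ε^2) y := ⟨_, rfl⟩
  have hG : 0 < G := hGdef ▸ gfun_pos hc y
  obtain ⟨u, hu⟩ : ∃ u' : ℝ, u' = G ^ (-p-1-1) := ⟨_, rfl⟩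
  have hv : G ^ (-p-1) = u * G := by
    rw [hu, ← Real.rpow_add_one hG.ne' (-p-1-1)]
    congr 1; ring
  have hw : G ^ (-p) = u * G * G := by
    rw [hu, ← Real.rpow_add_one hG.ne' (-p-1-1), ← Real.rpow_add_one hG.ne' (-p-1-1+1)]
    congr 1; ring
  obtain ⟨S, hS⟩ : ∃ S' : ℝ, S' = ∑ k, (y k - a k) ^ 2 := ⟨_, rfl⟩
  have hlap : lap n W y = (-2*p*ε^p) * ((-p-1) * u * 2 * S + (n:ℝ) * (u * G)) := by
    rw [lap]
    have hterm : ∀ k ∈ Finset.univ, pd n (pd n W k) k y =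
        ((-2*p*ε^p) * ((-p-1) * u * 2)) * (y k - a k)^2 + (-2*p*ε^p) * (u * G) := by
      intro k _
      rw [hpd2 k k y, if_pos rfl, ← hGdef, hv, hu]
      ring
    rw [Finset.sum_congr rfl hterm, Finset.sum_add_distrib, ← Finset.mul_sum,
      Finset.sum_const, Finset.card_univ, Fintype.card_fin, nsmul_eq_mul, ← hS]
    ring
  have hsq : ∑ k, (pd n W k y) ^ 2 = ((-2*p*ε^p)^2 * (u*G)^2) * S := by
    have hterm : ∀ k ∈ Finset.univ, (pd n W k y)^2 =
        ((-2*p*ε^p)^2 * (u*G)^2) * (y k - a k)^2 := by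
      intro k _
      rw [hpdW k y, ← hGdef, hv]
      ring
    rw [Finset.sum_congr rfl hterm, ← Finset.mul_sum, ← hS]
  have hWy : W y = ε ^ p * (u * G * G) := by
    rw [hW']
    simp only
    rw [← hGdef, hw]
  have h1 : (2*p+2 : ℝ) ≠ 0 := by positivity
  have h2 : (2*p+2-2 : ℝ) ≠ 0 := by
    intro h; apply hp_pos.ne'; linarith
  rw [hpd2 i j y, hpdW i y, hpdW j y, hlap, hsq, hWy, ← hGdef, hv, ← hu]
  rcases eq_or_ne i j with rfl | hne
  · rw [hnp]
    field_simp [hp_pos.ne']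
    ring
  · rw [if_neg (Ne.symm hne), if_neg hne, mul_zero, hnp]
    field_simp [hp_pos.ne']
    ring
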